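/- Fix an integer k ≥ 2 and an alphabet Σ of k symbols. For every integer i ≥ 2, T(i) − S(i) = Σ_{d | i, d < i} ⌊(i/d − 1)/2⌋ · p̂(d), where T(i) is the number of ordered triples (u,v,z) of words with uv = z and |z| = i, S(i) is the number of such triples counted up to the identification of (u,v,z) with (v,u,z) whenever uv = vu = z, and p̂(d) is the number of aperiodic words of length d. -/

import Mathlib

/-- w^j : j repeated copies of the word w joined together. -/
noncomputable def wpow {α : Type*} (w : List α) (j : ℕ) : List α := (List.replicate j w).flatten

/-- A nonempty word is aperiodic (primitive) if writing it as x^j with j ≥ 1 forces j = 1. -/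
noncomputable def Aperiodic {α : Type*} (w : List α) : Prop :=
  w ≠ [] ∧ ∀ (x : List α) (j : ℕ), 1 ≤ j → w = wpow x j → j = 1

/-- p̂(d): the number of aperiodic words of length d over an alphabet of k symbols. -/
noncomputable def aper (k d : ℕ) : ℕ := Set.ncard {w : List (Fin k) | w.length = d ∧ Aperiodic w}

/-- T(i): the number of ordered triples (u,v,z) of nonempty words with uv = z, |z| = i
(the TUPLE convention). -/
noncomputable def T (k i : ℕ) : ℕ :=
  Set.ncard {t : List (Fin k) × List (Fin k) × List (Fin k) |
    t.1 ≠ [] ∧ t.2.1 ≠ [] ∧ t.1 ++ t.2.1 = t.2.2 ∧ t.2.2.length = i}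

/-- S(i): the number of such triples counted up to identifying (u,v,z) with (v,u,z)
whenever uv = vu = z, i.e. the number of unordered reaction sets {u,v,uv} with
|uv| = i (the SET convention). -/
noncomputable def S (k i : ℕ) : ℕ :=
  Set.ncard {s : Finset (List (Fin k)) | ∃ u v : List (Fin k),
    u ≠ [] ∧ v ≠ [] ∧ (u ++ v).length = i ∧ s = {u, v, u ++ v}}

variable {α : Type*}

lemma wpow_zero (w : List α) : wpow w 0 = [] := rfl

lemma wpow_succ (w : List α) (j : ℕ) : wpow w (j+1) = w ++ wpow w j := by
  simp [wpow, List.replicate_succ]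

lemma wpow_one (w : List α) : wpow w 1 = w := by simp [wpow]

lemma wpow_add (w : List α) (a b : ℕ) : wpow w (a+b) = wpow w a ++ wpow w b := by
  induction a with
  | zero => simp [wpow_zero]
  | succ n ih => rw [Nat.succ_add, wpow_succ, ih, wpow_succ, List.append_assoc]

lemma length_wpow (w : List α) (j : ℕ) : (wpow w j).length = j * w.length := by
  induction j with
  | zero => simp [wpow_zero]
  | succ n ih => rw [wpow_succ, List.length_append, ih]; ring

lemma wpow_wpow (w : List α) (a b : ℕ) : wpow (wpow w a) b = wpow w (a*b) := by
  induction b with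
  | zero => simp [wpow_zero]
  | succ n ih => rw [wpow_succ, ih, Nat.mul_succ, Nat.add_comm, wpow_add]

lemma wpow_comm (w : List α) (a : ℕ) : wpow w a ++ w = w ++ wpow w a := by
  calc wpow w a ++ w = wpow w a ++ wpow w 1 := by rw [wpow_one]
  _ = wpow w (a+1) := by rw [wpow_add]
  _ = wpow w (1+a) := by rw [Nat.add_comm]
  _ = wpow w 1 ++ wpow w a := by rw [wpow_add]
  _ = w ++ wpow w a := by rw [wpow_one]

lemma wpow_comm' (w : List α) (a b : ℕ) : wpow w a ++ wpow w b = wpow w b ++ wpow w a := by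
  rw [← wpow_add, ← wpow_add, Nat.add_comm]

lemma wpow_ne_nil {w : List α} (hw : w ≠ []) {j : ℕ} (hj : 1 ≤ j) : wpow w j ≠ [] := by
  intro h
  have := congrArg List.length h
  rw [length_wpow] at this
  simp at this
  rcases this with h | h
  · omega
  · exact hw h

/-- commuting words are powers of a common word -/
lemma comm_powers : ∀ (u v : List α), u ++ v = v ++ u →
    ∃ x a b, u = wpow x a ∧ v = wpow x b := by
  have key : ∀ (n : ℕ) (u v : List α), u.length + v.length ≤ n → u.length ≤ v.length →
      u ++ v = v ++ u → ∃ x a b, u = wpow x a ∧ v = wpow x b := by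
    intro n
    induction n with
    | zero =>
      intro u v h1 _ _
      refine ⟨[], 0, 0, ?_, ?_⟩ <;>
        simp [wpow_zero, List.length_eq_zero_iff.mp (by omega : u.length = 0),
          List.length_eq_zero_iff.mp (by omega : v.length = 0)]
    | succ n ih =>
      intro u v h1 h2 h3
      rcases eq_or_ne u [] with rfl | hu
      · exact ⟨v, 0, 1, by simp [wpow_zero], by simp [wpow_one]⟩
      · -- u is a prefix of v
        have hup : u = v.take u.length := by
          have := congrArg (List.take u.length) h3
          rwa [List.take_append_of_le_length h2, List.take_left] at this
        set w := v.drop u.length with hw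
        have hv : v = u ++ w := by rw [hup, hw]; simp
        have hcomm : u ++ w = w ++ u := by
          have : u ++ (u ++ w) = u ++ (w ++ u) := by
            have h4 : u ++ v = v ++ u := h3
            rw [hv] at h4
            simpa [List.append_assoc] using h4
          exact List.append_cancel_left this
        have hul : 1 ≤ u.length := by
          rcases Nat.pos_of_ne_zero (fun h => hu (List.length_eq_zero_iff.mp h)) with h; omega
        have hwl : w.length = v.length - u.length := by simp [hw]
        rcases le_or_gt u.length w.length with hle | hlt
        · rcases ih u w (by omega) hle hcomm with ⟨x, a, b, hxa, hxb⟩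
          exact ⟨x, a, a + b, hxa, by rw [hv, hxa, hxb, wpow_add]⟩
        · rcases ih w u (by omega) (le_of_lt hlt) hcomm.symm with ⟨x, b, a, hxb, hxa⟩
          exact ⟨x, a, a + b, hxa, by rw [hv, hxa, hxb, wpow_add]⟩
  intro u v h
  rcases le_or_gt u.length v.length with hle | hlt
  · exact key _ u v le_rfl hle h
  · rcases key _ v u le_rfl (le_of_lt hlt) h.symm with ⟨x, b, a, hb, ha⟩
    exact ⟨x, a, b, ha, hb⟩

/-- every nonempty word is a power of an aperiodic word -/
lemma exists_prim : ∀ (w : List α), w ≠ [] → ∃ x n, Aperiodic x ∧ 1 ≤ n ∧ w = wpow x n := by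
  have key : ∀ (N : ℕ) (w : List α), w.length ≤ N → w ≠ [] →
      ∃ x n, Aperiodic x ∧ 1 ≤ n ∧ w = wpow x n := by
    intro N
    induction N with
    | zero =>
      intro w h1 h2
      exact absurd (List.length_eq_zero_iff.mp (by omega)) h2
    | succ N ih =>
      intro w h1 h2
      by_cases hap : Aperiodic w
      · exact ⟨w, 1, hap, le_rfl, (wpow_one w).symm⟩
      · rw [Aperiodic, not_and_or] at hap
        rcases hap with h | h
        · exact absurd (not_not.mp h) h2
        · push_neg at h
          rcases h with ⟨x, j, hj1, hxj, hjne⟩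
          have hx : x ≠ [] := by
            intro hx; rw [hx] at hxj
            have := congrArg List.length hxj
            rw [length_wpow] at this; simp at this; exact h2 this
          have hj2 : 2 ≤ j := by omega
          have hxl : 1 ≤ x.length := Nat.pos_of_ne_zero (fun h => hx (List.length_eq_zero_iff.mp h))
          have hlen : w.length = j * x.length := by rw [hxj, length_wpow]
          have : x.length ≤ N := by nlinarith
          rcases ih x this hx with ⟨y, m, hy, hm, hym⟩
          exact ⟨y, m * j, hy, Nat.one_le_iff_ne_zero.mpr (by positivity), by
            rw [hxj, hym, wpow_wpow]⟩
  intro w hw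
  exact key w.length w le_rfl hw

/-- words commuting with a common nonempty word commute with each other -/
lemma comm_of_comm_z : ∀ (z : List α), z ≠ [] → ∀ a b, a ++ z = z ++ a → b ++ z = z ++ b →
    a ++ b = b ++ a := by
  intro z hz
  have hzl : 1 ≤ z.length := Nat.pos_of_ne_zero (fun h => hz (List.length_eq_zero_iff.mp h))
  have key : ∀ (N : ℕ) (a b : List α), a.length + b.length ≤ N → a.length ≤ b.length →
      a ++ z = z ++ a → b ++ z = z ++ b → a ++ b = b ++ a := by
    intro N
    induction N with
    | zero =>
      intro a b h1 _ _ _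
      rw [List.length_eq_zero_iff.mp (by omega : a.length = 0),
        List.length_eq_zero_iff.mp (by omega : b.length = 0)]
    | succ N ih =>
      intro a b h1 h2 ha hb
      rcases eq_or_ne a [] with rfl | hane
      · simp
      have hal : 1 ≤ a.length := Nat.pos_of_ne_zero (fun h => hane (List.length_eq_zero_iff.mp h))
      rcases le_or_gt b.length z.length with hbz | hbz
      · -- a, b both prefixes of z, so a is prefix of b
        have hap : a = z.take a.length := by
          have := congrArg (List.take a.length) ha
          rwa [List.take_append_of_le_length (le_trans h2 hbz), List.take_left] at this
        have hbp : b = z.take b.length := by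
          have := congrArg (List.take b.length) hb
          rwa [List.take_append_of_le_length hbz, List.take_left] at this
        have hab : a = b.take a.length := by
          rw [hbp, List.take_take, min_eq_left h2, ← hap]
        set c := b.drop a.length with hc
        have hbc : b = a ++ c := by rw [hab, hc]; simp
        have hcz : c ++ z = z ++ c := by
          have h4 : a ++ (c ++ z) = a ++ (z ++ c) := by
            have : (a ++ c) ++ z = z ++ (a ++ c) := by rw [← hbc]; exact hb
            calc a ++ (c ++ z) = (a ++ c) ++ z := by rw [List.append_assoc]
            _ = z ++ (a ++ c) := this
            _ = (z ++ a) ++ c := by rw [List.append_assoc]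
            _ = (a ++ z) ++ c := by rw [ha]
            _ = a ++ (z ++ c) := by rw [List.append_assoc]
          exact List.append_cancel_left h4
        have hclen : c.length = b.length - a.length := by simp [hc]
        have hac : a ++ c = c ++ a := by
          rcases le_or_gt a.length c.length with h5 | h5
          · exact ih a c (by omega) h5 ha hcz
          · exact (ih c a (by omega) (le_of_lt h5) hcz ha).symm
        calc a ++ b = a ++ (a ++ c) := by rw [hbc]
        _ = a ++ (c ++ a) := by rw [hac]
        _ = (a ++ c) ++ a := by rw [List.append_assoc]
        _ = b ++ a := by rw [← hbc]
      · -- z is a prefix of b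
        have hzp : z = b.take z.length := by
          have := congrArg (List.take z.length) hb
          rw [List.take_append_of_le_length (le_of_lt hbz), List.take_left] at this
          exact this.symm
        set d := b.drop z.length with hd
        have hbd : b = z ++ d := by rw [hzp, hd]; simp
        have hdz : d ++ z = z ++ d := by
          have h4 : z ++ (d ++ z) = z ++ (z ++ d) := by
            have : (z ++ d) ++ z = z ++ (z ++ d) := by rw [← hbd]; exact hb
            rw [← this, List.append_assoc]
          exact List.append_cancel_left h4
        have hdlen : d.length = b.length - z.length := by simp [hd]
        have had : a ++ d = d ++ a := by
          rcases le_or_gt a.length d.length with h5 | h5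
          · exact ih a d (by omega) h5 ha hdz
          · exact (ih d a (by omega) (le_of_lt h5) hdz ha).symm
        calc a ++ b = a ++ (z ++ d) := by rw [hbd]
        _ = (a ++ z) ++ d := by rw [List.append_assoc]
        _ = (z ++ a) ++ d := by rw [ha]
        _ = z ++ (a ++ d) := by rw [List.append_assoc]
        _ = z ++ (d ++ a) := by rw [had]
        _ = (z ++ d) ++ a := by rw [List.append_assoc]
        _ = b ++ a := by rw [← hbd]
  intro a b ha hb
  rcases le_or_gt a.length b.length with h | h
  · exact key _ a b le_rfl h ha hb
  · exact (key _ b a le_rfl (le_of_lt h) hb ha).symm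

/-- commuting words are powers of a common APERIODIC word -/
lemma comm_powers_prim (u v : List α) (hu : u ≠ []) (h : u ++ v = v ++ u) :
    ∃ x a b, Aperiodic x ∧ u = wpow x a ∧ v = wpow x b := by
  rcases comm_powers u v h with ⟨t, p, q, hup, hvq⟩
  have ht : t ≠ [] := by
    intro ht; rw [ht] at hup
    have := congrArg List.length hup
    rw [length_wpow] at this; simp at this; exact hu this
  rcases exists_prim t ht with ⟨s, m, hs, hm, hsm⟩
  exact ⟨s, m * p, m * q, hs, by rw [hup, hsm, wpow_wpow], by rw [hvq, hsm, wpow_wpow]⟩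

/-- uniqueness of the aperiodic root -/
lemma prim_unique {x y : List α} (hx : Aperiodic x) (hy : Aperiodic y) {a b : ℕ}
    (ha : 1 ≤ a) (hb : 1 ≤ b) (h : wpow x a = wpow y b) : x = y ∧ a = b := by
  have hz : wpow x a ≠ [] := wpow_ne_nil hx.1 ha
  have hxz : x ++ wpow x a = wpow x a ++ x := (wpow_comm x a).symm
  have hyz : y ++ wpow x a = wpow x a ++ y := by rw [h]; exact (wpow_comm y b).symm
  have hxy : x ++ y = y ++ x := comm_of_comm_z (wpow x a) hz x y hxz hyz
  rcases comm_powers_prim x y hx.1 hxy with ⟨s, p, q, hs, hxp, hyq⟩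
  have hp : 1 ≤ p := by
    by_contra hc
    have : p = 0 := by omega
    rw [this, wpow_zero] at hxp; exact hx.1 hxp
  have hq : 1 ≤ q := by
    by_contra hc
    have : q = 0 := by omega
    rw [this, wpow_zero] at hyq; exact hy.1 hyq
  have hp1 : p = 1 := hx.2 s p hp hxp
  have hq1 : q = 1 := hy.2 s q hq hyq
  have hxy2 : x = y := by rw [hxp, hyq, hp1, hq1]
  constructor
  · exact hxy2
  · have hlen := congrArg List.length h
    rw [length_wpow, length_wpow, ← hxy2] at hlen
    have hxl : 1 ≤ x.length := Nat.pos_of_ne_zero (fun h => hx.1 (List.length_eq_zero_iff.mp h))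
    exact Nat.eq_of_mul_eq_mul_right hxl hlen

lemma comm_struct (u v : List α) (hu : u ≠ []) (hv : v ≠ []) (h : u ++ v = v ++ u) :
    ∃ x a b, Aperiodic x ∧ 1 ≤ a ∧ 1 ≤ b ∧ u = wpow x a ∧ v = wpow x b := by
  rcases comm_powers_prim u v hu h with ⟨x, a, b, hx, hua, hvb⟩
  refine ⟨x, a, b, hx, ?_, ?_, hua, hvb⟩
  · by_contra hc
    have ha0 : a = 0 := by omega
    rw [ha0, wpow_zero] at hua; exact hu hua
  · by_contra hc
    have hb0 : b = 0 := by omega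
    rw [hb0, wpow_zero] at hvb; exact hv hvb

lemma comm_eq_of_len {u v : List α} (hc : u ++ v = v ++ u) (hl : u.length = v.length) :
    u = v := by
  have h1 := congrArg (List.take u.length) hc
  rw [List.take_left] at h1
  rw [hl, List.take_left] at h1
  exact h1

lemma key_inj [DecidableEq α] {u v z u' v' z' : List α}
    (h : u ++ v = z) (h' : u' ++ v' = z')
    (hu : u ≠ []) (hv : v ≠ []) (hu' : u' ≠ []) (hv' : v' ≠ [])
    (hlen : z.length = z'.length)
    (hg : ¬(u ++ v = v ++ u ∧ u.length < v.length))
    (hg' : ¬(u' ++ v' = v' ++ u' ∧ u'.length < v'.length))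
    (hset : ({u, v, z} : Finset (List α)) = {u', v', z'}) :
    u = u' ∧ v = v' ∧ z = z' := by
  have one_le : ∀ w : List α, w ≠ [] → 1 ≤ w.length := fun w hw =>
    Nat.pos_of_ne_zero (fun hh => hw (List.length_eq_zero_iff.mp hh))
  have hul : u.length < z.length := by
    rw [← h, List.length_append]; have := one_le v hv; omega
  have hvl : v.length < z.length := by
    rw [← h, List.length_append]; have := one_le u hu; omega
  have hul' : u'.length < z'.length := by
    rw [← h', List.length_append]; have := one_le v' hv'; omega
  have hvl' : v'.length < z'.length := by
    rw [← h', List.length_append]; have := one_le u' hu'; omega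
  have hz'mem : z' ∈ ({u, v, z} : Finset (List α)) := by rw [hset]; simp
  simp only [Finset.mem_insert, Finset.mem_singleton] at hz'mem
  have hzz' : z = z' := by
    rcases hz'mem with rfl | rfl | rfl
    · omega
    · omega
    · rfl
  subst hzz'
  have huv' : u ++ v = u' ++ v' := h.trans h'.symm
  have hu'mem : u' ∈ ({u, v, z} : Finset (List α)) := by rw [hset]; simp
  have hv'mem : v' ∈ ({u, v, z} : Finset (List α)) := by rw [hset]; simp
  simp only [Finset.mem_insert, Finset.mem_singleton] at hu'mem hv'mem
  rcases hu'mem with h1 | h1 | h1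
  · -- u' = u
    refine ⟨h1.symm, ?_, rfl⟩
    rw [← h1] at huv'
    exact List.append_cancel_left huv'
  · -- u' = v
    rcases hv'mem with h2 | h2 | h2
    · -- v' = u : commuting case
      rw [h1, h2] at huv'
      have hnlt : ¬ u.length < v.length := fun hc => hg ⟨huv', hc⟩
      have hnlt' : ¬ v.length < u.length := by
        intro hc
        exact hg' ⟨by rw [h1, h2, ← huv'], by rw [h1, h2]; exact hc⟩
      have huv : u = v := comm_eq_of_len huv' (by omega)
      exact ⟨by rw [h1, ← huv], by rw [h2, huv], rfl⟩
    · -- v' = v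
      rw [h1, h2] at huv'
      have huv : u = v := List.append_cancel_right huv'
      exact ⟨by rw [h1, ← huv], h2.symm, rfl⟩
    · rw [h2] at hvl'; omega
  · rw [h1] at hul'; omega

-- ==================== counting ====================

def TSset (k i : ℕ) : Set (List (Fin k) × List (Fin k) × List (Fin k)) :=
  {t | t.1 ≠ [] ∧ t.2.1 ≠ [] ∧ t.1 ++ t.2.1 = t.2.2 ∧ t.2.2.length = i}

def SSset (k i : ℕ) : Set (Finset (List (Fin k))) :=
  {s | ∃ u v : List (Fin k), u ≠ [] ∧ v ≠ [] ∧ (u ++ v).length = i ∧ s = {u, v, u ++ v}}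

def PSset (k d : ℕ) : Set (List (Fin k)) := {w | w.length = d ∧ Aperiodic w}

lemma T_eq (k i : ℕ) : T k i = Nat.card ↥(TSset k i) := (Nat.card_coe_set_eq _)

lemma S_eq (k i : ℕ) : S k i = Nat.card ↥(SSset k i) := (Nat.card_coe_set_eq _)

lemma aper_eq (k d : ℕ) : aper k d = Nat.card ↥(PSset k d) := (Nat.card_coe_set_eq _)

lemma TS_finite (k i : ℕ) : (TSset k i).Finite := by
  apply Set.Finite.subset (Set.Finite.prod (List.finite_length_le (Fin k) i)
    (Set.Finite.prod (List.finite_length_le (Fin k) i) (List.finite_length_le (Fin k) i)))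
  rintro ⟨u, v, z⟩ ⟨hu, hv, huv, hz⟩
  have hlen : u.length + v.length = i := by
    have := congrArg List.length huv
    rw [List.length_append, hz] at this
    exact this
  simp only [Set.mem_prod, Set.mem_setOf_eq]
  have hz' : z.length = i := hz
  omega

lemma PS_finite (k d : ℕ) : (PSset k d).Finite :=
  (List.finite_length_eq (Fin k) d).subset (fun w hw => hw.1)

lemma SS_eq_image (k i : ℕ) :
    SSset k i = (fun t : List (Fin k) × List (Fin k) × List (Fin k) =>
      ({t.1, t.2.1, t.2.2} : Finset (List (Fin k)))) '' TSset k i := by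
  ext s
  constructor
  · rintro ⟨u, v, hu, hv, hlen, rfl⟩
    exact ⟨(u, v, u ++ v), ⟨hu, hv, rfl, hlen⟩, rfl⟩
  · rintro ⟨⟨u, v, z⟩, ⟨hu, hv, huv, hz⟩, rfl⟩
    exact ⟨u, v, hu, hv, by rw [huv]; exact hz, by simp only; rw [huv]⟩


def Bpred (k i : ℕ) (t : ↥(TSset k i)) : Prop :=
  t.val.1 ++ t.val.2.1 = t.val.2.1 ++ t.val.1 ∧ t.val.1.length < t.val.2.1.length

def SigT (k i : ℕ) :=
  Σ d : ↥i.properDivisors, ↥(PSset k d.val) × Fin ((i / d.val - 1) / 2)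

lemma G_mem (k i : ℕ) {d : ℕ} (hd : d ∈ i.properDivisors) {x : List (Fin k)}
    (hx : x ∈ PSset k d) {c : ℕ} (hc : c < (i / d - 1) / 2) :
    (wpow x (c + 1), wpow x (i / d - (c + 1)), wpow x (i / d)) ∈ TSset k i := by
  obtain ⟨hdvd, hdlt⟩ := Nat.mem_properDivisors.mp hd
  have dpos : 0 < d := Nat.pos_of_mem_properDivisors hd
  have hnd : i / d * d = i := Nat.div_mul_cancel hdvd
  have hxne : x ≠ [] := hx.2.1
  refine ⟨wpow_ne_nil hxne (by omega), wpow_ne_nil hxne (by omega), ?_, ?_⟩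
  · show wpow x (c + 1) ++ wpow x (i / d - (c + 1)) = wpow x (i / d)
    rw [← wpow_add]
    congr 1
    omega
  · show (wpow x (i / d)).length = i
    rw [length_wpow, hx.1]
    exact hnd

lemma G_B (k i : ℕ) {d : ℕ} (hd : d ∈ i.properDivisors) {x : List (Fin k)}
    (hx : x ∈ PSset k d) {c : ℕ} (hc : c < (i / d - 1) / 2) :
    wpow x (c + 1) ++ wpow x (i / d - (c + 1)) =
      wpow x (i / d - (c + 1)) ++ wpow x (c + 1) ∧
    (wpow x (c + 1)).length < (wpow x (i / d - (c + 1))).length := by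
  have dpos : 0 < d := Nat.pos_of_mem_properDivisors hd
  constructor
  · rw [← wpow_add, ← wpow_add]
    congr 1
    omega
  · rw [length_wpow, length_wpow, hx.1]
    have h1 : c + 1 < i / d - (c + 1) := by omega
    exact Nat.mul_lt_mul_of_pos_right h1 dpos

noncomputable def G (k i : ℕ) (e : SigT k i) : {t : ↥(TSset k i) // Bpred k i t} :=
  ⟨⟨(wpow e.2.1.val (e.2.2.val + 1),
     wpow e.2.1.val (i / e.1.val - (e.2.2.val + 1)),
     wpow e.2.1.val (i / e.1.val)),
    G_mem k i e.1.prop e.2.1.prop e.2.2.isLt⟩,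
   G_B k i e.1.prop e.2.1.prop e.2.2.isLt⟩

lemma G_inj (k i : ℕ) : Function.Injective (G k i) := by
  rintro ⟨⟨d, hd⟩, ⟨x, hx⟩, ⟨c, hc⟩⟩ ⟨⟨d', hd'⟩, ⟨x', hx'⟩, ⟨c', hc'⟩⟩ heq
  have h3 := congrArg (fun t : {t : ↥(TSset k i) // Bpred k i t} => t.val.val) heq
  simp only [G, Prod.mk.injEq] at h3
  obtain ⟨hA, hB2, hC⟩ := h3
  obtain ⟨hxeq, hceq⟩ := prim_unique hx.2 hx'.2 (by omega) (by omega) hA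
  have hxd : x.length = d := hx.1
  have hxd' : x'.length = d' := hx'.1
  have hdd : d = d' := by rw [← hxd, ← hxd', hxeq]
  subst hdd
  obtain rfl : x = x' := hxeq
  obtain rfl : c = c' := by omega
  rfl

lemma G_surj (k i : ℕ) : Function.Surjective (G k i) := by
  rintro ⟨⟨⟨u, v, z⟩, ht⟩, hbt⟩
  obtain ⟨hu, hv, huv, hz⟩ := ht
  have huv' : u ++ v = z := huv
  have hzi : z.length = i := hz
  have hcomm' : u ++ v = v ++ u := hbt.1
  have hlt' : u.length < v.length := hbt.2
  obtain ⟨x, a, b, hx, ha, hb, hua, hvb⟩ := comm_struct u v hu hv hcomm'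
  have hxne : x ≠ [] := hx.1
  have dpos : 0 < x.length := List.length_pos_iff.mpr hxne
  have hilen : i = (a + b) * x.length := by
    rw [← hzi, ← huv', hua, hvb, List.length_append, length_wpow, length_wpow]
    ring
  have hdvd : x.length ∣ i := ⟨a + b, by rw [hilen]; ring⟩
  have hn : i / x.length = a + b := by rw [hilen]; exact Nat.mul_div_cancel _ dpos
  have hab : a < b := by
    have h7 := hlt'
    rw [hua, hvb, length_wpow, length_wpow] at h7
    exact Nat.lt_of_mul_lt_mul_right h7
  have hdlt : x.length < i := by
    have h6 : 2 * x.length ≤ (a + b) * x.length := Nat.mul_le_mul_right _ (by omega)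
    omega
  refine ⟨⟨⟨x.length, Nat.mem_properDivisors.mpr ⟨hdvd, hdlt⟩⟩,
    ⟨x, ⟨rfl, hx⟩⟩, ⟨a - 1, by rw [hn]; omega⟩⟩, ?_⟩
  apply Subtype.ext
  apply Subtype.ext
  show (wpow x (a - 1 + 1), wpow x (i / x.length - (a - 1 + 1)),
      wpow x (i / x.length)) = (u, v, z)
  refine Prod.ext ?_ (Prod.ext ?_ ?_)
  · show wpow x (a - 1 + 1) = u
    rw [(by omega : a - 1 + 1 = a)]
    exact hua.symm
  · show wpow x (i / x.length - (a - 1 + 1)) = v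
    rw [hn, (by omega : a + b - (a - 1 + 1) = b)]
    exact hvb.symm
  · show wpow x (i / x.length) = z
    rw [hn, wpow_add, ← hua, ← hvb]
    exact huv'

theorem main_count (k i : ℕ) (hi : 2 ≤ i) :
    T k i = S k i + ∑ d ∈ i.properDivisors, ((i / d - 1) / 2) * aper k d := by
  classical
  have hTfin := TS_finite k i
  have hSfin : (SSset k i).Finite := by
    rw [SS_eq_image]; exact hTfin.image _
  haveI := hTfin.to_subtype
  haveI := hSfin.to_subtype
  haveI : ∀ d : ℕ, Fintype ↥(PSset k d) := fun d => (PS_finite k d).fintype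
  have e1 : Nat.card ↥(TSset k i) = Nat.card {t : ↥(TSset k i) // Bpred k i t} +
      Nat.card {t : ↥(TSset k i) // ¬ Bpred k i t} := by
    rw [← Nat.card_sum]
    exact Nat.card_congr (Equiv.sumCompl (Bpred k i)).symm
  have e2 : Nat.card {t : ↥(TSset k i) // ¬ Bpred k i t} = Nat.card ↥(SSset k i) := by
    apply Nat.card_congr
    refine Equiv.ofBijective
      (fun t => ⟨{t.val.val.1, t.val.val.2.1, t.val.val.2.2}, ?_⟩) ⟨?_, ?_⟩
    · rw [SS_eq_image]
      exact ⟨t.val.val, t.val.prop, rfl⟩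
    · rintro ⟨⟨⟨u, v, z⟩, ht⟩, hbt⟩ ⟨⟨⟨u', v', z'⟩, ht'⟩, hbt'⟩ heq
      obtain ⟨hu, hv, huv, hz⟩ := ht
      obtain ⟨hu', hv', huv', hz'⟩ := ht'
      have hset : ({u, v, z} : Finset (List (Fin k))) = {u', v', z'} :=
        congrArg Subtype.val heq
      have hkey := key_inj huv huv' hu hv hu' hv'
        (by rw [(hz : z.length = i), (hz' : z'.length = i)]) hbt hbt' hset
      apply Subtype.ext
      apply Subtype.ext
      show (u, v, z) = (u', v', z')
      exact Prod.ext hkey.1 (Prod.ext hkey.2.1 hkey.2.2)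
    · rintro ⟨s, hs⟩
      obtain ⟨u, v, hu, hv, hlen, rfl⟩ := hs
      by_cases hc : u ++ v = v ++ u ∧ u.length < v.length
      · refine ⟨⟨⟨(v, u, v ++ u), ⟨hv, hu, rfl, by rw [← hc.1]; exact hlen⟩⟩, ?_⟩, ?_⟩
        · rintro ⟨hc1, hc2⟩
          have hvu : v.length < u.length := hc2
          have := hc.2
          omega
        · apply Subtype.ext
          show ({v, u, v ++ u} : Finset (List (Fin k))) = {u, v, u ++ v}
          rw [hc.1]
          apply Finset.insert_comm
      · exact ⟨⟨⟨(u, v, u ++ v), ⟨hu, hv, rfl, hlen⟩⟩, hc⟩, rfl⟩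
  have e3 : Nat.card {t : ↥(TSset k i) // Bpred k i t} =
      ∑ d ∈ i.properDivisors, ((i / d - 1) / 2) * aper k d := by
    have hcard : Nat.card {t : ↥(TSset k i) // Bpred k i t} = Nat.card (SigT k i) :=
      Nat.card_congr (Equiv.ofBijective (G k i) ⟨G_inj k i, G_surj k i⟩).symm
    rw [hcard]
    rw [show SigT k i = (Σ d : ↥i.properDivisors,
      ↥(PSset k d.val) × Fin ((i / d.val - 1) / 2)) from rfl]
    rw [Nat.card_eq_fintype_card, Fintype.card_sigma,
      ← Finset.sum_coe_sort i.properDivisors (fun d => ((i / d - 1) / 2) * aper k d)]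
    apply Finset.sum_congr rfl
    intro d _
    rw [Fintype.card_prod, Fintype.card_fin, aper_eq, Nat.card_eq_fintype_card]
    ring
  rw [T_eq, S_eq, e1, e2, e3]
  omega


/-- for i ≥ 2, T(i) − S(i) = Σ_{d | i, d < i} ⌊(i/d − 1)/2⌋·p̂(d). -/
theorem stmt_9 (k : ℕ) (hk : 2 ≤ k) (i : ℕ) (hi : 2 ≤ i) :
    T k i - S k i = ∑ d ∈ i.properDivisors, ((i / d - 1) / 2) * aper k d := by
  have := main_count k i hi
  omega
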